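/- arXiv:math/0303199 — 2 statements merged into one kernel-verified Lean document; each statement's English description precedes it below -/
import Mathlib

section
/- Let r > 0 and 0 < α < 1. Let (z_n) be a sequence in the open unit disk 𝔻 ⊂ ℂ with z_n → 1, and for each n let h_n : D(0,r) → 𝔻 be a holomorphic function with h_n(0) = 0. Define g_n(z) = (h_n(z) + z_n)/(1 + conj(z_n)·h_n(z)). Then g_n converges to the constant function 1 uniformly on the disk D(0, αr). -/
open Filter Metric

/-- If `z_n → 1` in the open unit disk and `h_n : D(0,r) → 𝔻` are holomorphic with
`h_n(0) = 0`, then the Möbius compositions `g_n = (h_n + z_n)/(1 + conj(z_n)·h_n)`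
converge uniformly to the constant `1` on `D(0, αr)`, for every `0 < α < 1`. -/
theorem moebius_uniform_convergence
    (r α : ℝ) (hr : 0 < r) (hα : α ∈ Set.Ioo (0:ℝ) 1)
    (z : ℕ → ℂ) (hz : ∀ n, z n ∈ ball (0:ℂ) 1)
    (hz1 : Tendsto z atTop (nhds 1))
    (h : ℕ → ℂ → ℂ)
    (hhol : ∀ n, DifferentiableOn ℂ (h n) (ball 0 r))
    (hmap : ∀ n, ∀ w ∈ ball (0:ℂ) r, h n w ∈ ball (0:ℂ) 1)
    (h0 : ∀ n, h n 0 = 0) :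
    TendstoUniformlyOn
      (fun n w => (h n w + z n) / (1 + (starRingEnd ℂ) (z n) * h n w))
      (fun _ => 1) atTop (ball 0 (α * r)) := by
  obtain ⟨hα0, hα1⟩ := hα
  -- Schwarz bound: for w ∈ ball 0 (α r), |h n w| ≤ α
  have key : ∀ n, ∀ w ∈ ball (0:ℂ) (α * r), ‖h n w‖ ≤ α := by
    intro n w hw
    have hw' : w ∈ ball (0:ℂ) r := by
      rw [mem_ball_zero_iff] at hw ⊢
      calc ‖w‖ < α * r := hw
        _ ≤ 1 * r := by nlinarith
        _ = r := one_mul r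
    have hmaps : Set.MapsTo (h n) (ball (0:ℂ) r) (ball (h n 0) 1) := by
      intro x hx
      rw [h0 n]
      exact hmap n x hx
    have := Complex.dist_le_div_mul_dist_of_mapsTo_ball (hhol n) (hmaps.mono_right ball_subset_closedBall) hw'
    rw [h0 n] at this
    simp only [dist_zero_right] at this
    have hwlt : ‖w‖ ≤ α * r := le_of_lt (by
      rwa [mem_ball_zero_iff] at hw)
    calc ‖h n w‖ ≤ 1 / r * ‖w‖ := this
      _ ≤ 1 / r * (α * r) := by
          apply mul_le_mul_of_nonneg_left hwlt (by positivity)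
      _ = α := by field_simp
  rw [Metric.tendstoUniformlyOn_iff]
  intro ε hε
  have hev : ∀ᶠ n in atTop, dist (z n) 1 < ε * (1 - α) / 2 := by
    have := Metric.tendsto_nhds.mp hz1 (ε * (1 - α) / 2) (by nlinarith)
    exact this
  filter_upwards [hev] with n hn w hw
  have hh := key n w hw
  have hzn : ‖z n‖ < 1 := by
    have := hz n; rwa [mem_ball_zero_iff] at this
  -- denominator bound
  have hden : (1 : ℝ) - α ≤ ‖(1 + (starRingEnd ℂ) (z n) * h n w)‖ := by
    have h1 : ‖((starRingEnd ℂ) (z n) * h n w)‖ ≤ α := by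
      rw [norm_mul, Complex.norm_conj]
      calc ‖z n‖ * ‖h n w‖ ≤ 1 * α :=
        mul_le_mul (le_of_lt hzn) hh (norm_nonneg _) zero_le_one
        _ = α := one_mul α
    calc (1:ℝ) - α ≤ 1 - ‖((starRingEnd ℂ) (z n) * h n w)‖ := by linarith
      _ = ‖(1:ℂ)‖ - ‖((starRingEnd ℂ) (z n) * h n w)‖ := by simp
      _ ≤ ‖(1 + (starRingEnd ℂ) (z n) * h n w)‖ := by
          have := norm_add_le (1 + (starRingEnd ℂ) (z n) * h n w)
            (-((starRingEnd ℂ) (z n) * h n w))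
          simp only [add_neg_cancel_right, norm_neg] at this
          linarith
  have hdenne : (1 + (starRingEnd ℂ) (z n) * h n w) ≠ 0 := by
    intro hc
    rw [hc] at hden
    simp at hden
    linarith
  have heq : (1:ℂ) - (h n w + z n) / (1 + (starRingEnd ℂ) (z n) * h n w)
      = (((starRingEnd ℂ) (z n) - 1) * h n w + (1 - z n)) /
        (1 + (starRingEnd ℂ) (z n) * h n w) := by
    rw [eq_div_iff hdenne, sub_mul, div_mul_cancel₀ _ hdenne]
    ring
  rw [dist_eq_norm]
  have hnum : ‖(((starRingEnd ℂ) (z n) - 1) * h n w + (1 - z n))‖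
      ≤ 2 * ‖1 - z n‖ := by
    have h1 : ‖((starRingEnd ℂ) (z n) - 1)‖ = ‖1 - z n‖ := by
      rw [show (starRingEnd ℂ) (z n) - 1 = (starRingEnd ℂ) (z n - 1) by simp [map_sub],
        Complex.norm_conj, ← norm_neg, neg_sub]
    calc ‖(((starRingEnd ℂ) (z n) - 1) * h n w + (1 - z n))‖
        ≤ ‖(((starRingEnd ℂ) (z n) - 1) * h n w)‖ + ‖1 - z n‖ :=
          norm_add_le _ _
      _ = ‖1 - z n‖ * ‖h n w‖ + ‖1 - z n‖ := by
          rw [norm_mul, h1]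
      _ ≤ ‖1 - z n‖ * 1 + ‖1 - z n‖ := by
          have := mul_le_mul_of_nonneg_left (hh.trans hα1.le) (norm_nonneg (1 - z n))
          linarith
      _ = 2 * ‖1 - z n‖ := by ring
  have hz1n : ‖1 - z n‖ < ε * (1 - α) / 2 := by
    rw [dist_eq_norm] at hn
    rw [← norm_neg]
    simpa [neg_sub] using hn
  calc ‖(1:ℂ) - (h n w + z n) / (1 + (starRingEnd ℂ) (z n) * h n w)‖
      = ‖(((starRingEnd ℂ) (z n) - 1) * h n w + (1 - z n))‖ /
        ‖(1 + (starRingEnd ℂ) (z n) * h n w)‖ := by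
        rw [heq]; simp [norm_div]
    _ ≤ (2 * ‖1 - z n‖) / (1 - α) := by
        apply div_le_div₀ (by positivity) hnum (by linarith) hden
    _ < ε := by
        rw [div_lt_iff₀ (by linarith)]
        nlinarith
end

section
/- Let h be a harmonic function on the open unit disk D ⊂ ℝ² ≅ ℂ satisfying h(conj(z)) = −h(z) for all z ∈ D (so h vanishes on the real diameter D⁰ = D ∩ ℝ), and suppose h ≥ 0 on the lower half-disk D⁻ = {z ∈ D : Im z < 0}. If the gradient of h vanishes at some point z₀ ∈ D⁰, then h is identically zero on D. Equivalently, if h is not identically zero, then ∇h(z₀) ≠ 0 for every z₀ on the real diameter. -/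
open Real Filter Set Topology MeasureTheory

/-- Partial derivative in the first (x) variable. -/
noncomputable def pd1 (u : ℝ × ℝ → ℝ) (z : ℝ × ℝ) : ℝ := deriv (fun t => u (t, z.2)) z.1

/-- Partial derivative in the second (y) variable. -/
noncomputable def pd2 (u : ℝ × ℝ → ℝ) (z : ℝ × ℝ) : ℝ := deriv (fun t => u (z.1, t)) z.2

/-- `W = √(1 + p² + q²)` for the function `u`. -/
noncomputable def Wg (u : ℝ × ℝ → ℝ) (z : ℝ × ℝ) : ℝ :=
  Real.sqrt (1 + pd1 u z ^ 2 + pd2 u z ^ 2)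

/-- `u` is a C² solution of the minimal surfaces equation
`(1+q²)r − 2pq·s + (1+p²)t = 0` on `Ω`. -/
def IsMSE (u : ℝ × ℝ → ℝ) (Ω : Set (ℝ × ℝ)) : Prop :=
  ContDiffOn ℝ 2 u Ω ∧ ∀ z ∈ Ω,
    (1 + pd2 u z ^ 2) * pd1 (pd1 u) z
      - 2 * pd1 u z * pd2 u z * pd2 (pd1 u) z
      + (1 + pd1 u z ^ 2) * pd2 (pd2 u) z = 0

/-- Euclidean length of a planar vector. -/
noncomputable def len (v : ℝ × ℝ) : ℝ := Real.sqrt (v.1 ^ 2 + v.2 ^ 2)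

/-- Euclidean open disk in the plane. -/
def eball (P : ℝ × ℝ) (ρ : ℝ) : Set (ℝ × ℝ) := {z | len (z - P) < ρ}

namespace BranchAux

lemma hasDerivAt_pd1 {u : ℝ × ℝ → ℝ} {z : ℝ × ℝ} (hu : DifferentiableAt ℝ u z) :
    HasDerivAt (fun t => u (t, z.2)) (fderiv ℝ u z (1, 0)) z.1 := by
  have h1 : HasDerivAt (fun t : ℝ => (t, z.2)) ((1:ℝ), (0:ℝ)) z.1 :=
    (hasDerivAt_id z.1).prodMk (hasDerivAt_const z.1 z.2)
  have h2 : HasFDerivAt u (fderiv ℝ u z) (z.1, z.2) := by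
    simpa using hu.hasFDerivAt
  exact h2.comp_hasDerivAt z.1 h1

lemma hasDerivAt_pd2 {u : ℝ × ℝ → ℝ} {z : ℝ × ℝ} (hu : DifferentiableAt ℝ u z) :
    HasDerivAt (fun t => u (z.1, t)) (fderiv ℝ u z (0, 1)) z.2 := by
  have h1 : HasDerivAt (fun t : ℝ => (z.1, t)) ((0:ℝ), (1:ℝ)) z.2 :=
    (hasDerivAt_const z.2 z.1).prodMk (hasDerivAt_id z.2)
  have h2 : HasFDerivAt u (fderiv ℝ u z) (z.1, z.2) := by
    simpa using hu.hasFDerivAt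
  exact h2.comp_hasDerivAt z.2 h1

lemma pd1_eq {u : ℝ × ℝ → ℝ} {z : ℝ × ℝ} (hu : DifferentiableAt ℝ u z) :
    pd1 u z = fderiv ℝ u z (1, 0) := (hasDerivAt_pd1 hu).deriv

lemma pd2_eq {u : ℝ × ℝ → ℝ} {z : ℝ × ℝ} (hu : DifferentiableAt ℝ u z) :
    pd2 u z = fderiv ℝ u z (0, 1) := (hasDerivAt_pd2 hu).deriv

lemma fderiv_apply_pd {u : ℝ × ℝ → ℝ} {z : ℝ × ℝ} (hu : DifferentiableAt ℝ u z) (v : ℝ × ℝ) :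
    fderiv ℝ u z v = v.1 * pd1 u z + v.2 * pd2 u z := by
  rw [pd1_eq hu, pd2_eq hu]
  have hv : v = v.1 • ((1:ℝ), (0:ℝ)) + v.2 • ((0:ℝ), (1:ℝ)) := by
    ext <;> simp
  nth_rewrite 1 [hv]
  rw [map_add, _root_.map_smul, _root_.map_smul, smul_eq_mul, smul_eq_mul]

end BranchAux

namespace BranchAux

lemma pd_pack {u : ℝ × ℝ → ℝ} {D : Set (ℝ × ℝ)} (hDo : IsOpen D)
    (hC2 : ContDiffOn ℝ 2 u D) {z : ℝ × ℝ} (hz : z ∈ D) :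
    HasFDerivAt (pd1 u)
      ((ContinuousLinearMap.apply ℝ ℝ ((1:ℝ),(0:ℝ))).comp (fderiv ℝ (fderiv ℝ u) z)) z ∧
    HasFDerivAt (pd2 u)
      ((ContinuousLinearMap.apply ℝ ℝ ((0:ℝ),(1:ℝ))).comp (fderiv ℝ (fderiv ℝ u) z)) z ∧
    (∀ v v' : ℝ × ℝ, fderiv ℝ (fderiv ℝ u) z v v' = fderiv ℝ (fderiv ℝ u) z v' v) := by
  have hdA : ∀ w ∈ D, DifferentiableAt ℝ u w := fun w hw =>
    (hC2.contDiffAt (hDo.mem_nhds hw)).differentiableAt two_ne_zero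
  have hF1 : ContDiffOn ℝ 1 (fderiv ℝ u) D := hC2.fderiv_of_isOpen hDo (by norm_num)
  have hFd : DifferentiableAt ℝ (fderiv ℝ u) z :=
    (hF1.contDiffAt (hDo.mem_nhds hz)).differentiableAt one_ne_zero
  have h1 : HasFDerivAt (fun w => fderiv ℝ u w ((1:ℝ),(0:ℝ)))
      ((ContinuousLinearMap.apply ℝ ℝ ((1:ℝ),(0:ℝ))).comp (fderiv ℝ (fderiv ℝ u) z)) z :=
    (ContinuousLinearMap.apply ℝ ℝ ((1:ℝ),(0:ℝ))).hasFDerivAt.comp z hFd.hasFDerivAt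
  have h2 : HasFDerivAt (fun w => fderiv ℝ u w ((0:ℝ),(1:ℝ)))
      ((ContinuousLinearMap.apply ℝ ℝ ((0:ℝ),(1:ℝ))).comp (fderiv ℝ (fderiv ℝ u) z)) z :=
    (ContinuousLinearMap.apply ℝ ℝ ((0:ℝ),(1:ℝ))).hasFDerivAt.comp z hFd.hasFDerivAt
  have e1 : pd1 u =ᶠ[𝓝 z] fun w => fderiv ℝ u w ((1:ℝ),(0:ℝ)) := by
    filter_upwards [hDo.mem_nhds hz] with w hw
    exact pd1_eq (hdA w hw)
  have e2 : pd2 u =ᶠ[𝓝 z] fun w => fderiv ℝ u w ((0:ℝ),(1:ℝ)) := by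
    filter_upwards [hDo.mem_nhds hz] with w hw
    exact pd2_eq (hdA w hw)
  have hsym := (hC2.contDiffAt (hDo.mem_nhds hz)).isSymmSndFDerivAt (by norm_num)
  exact ⟨h1.congr_of_eventuallyEq e1, h2.congr_of_eventuallyEq e2, fun v v' => hsym v v'⟩

lemma clm_ext_complex {T S : ℂ →L[ℝ] ℂ} (h1 : T 1 = S 1) (hI : T Complex.I = S Complex.I) :
    T = S := by
  ext v
  have hv : v = v.re • (1:ℂ) + v.im • Complex.I := by
    simp [Complex.real_smul, Complex.re_add_im]
  rw [hv, map_add, map_add, _root_.map_smul, _root_.map_smul, _root_.map_smul, _root_.map_smul,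
    h1, hI]

lemma hasDerivAt_of_real {f : ℂ → ℂ} {d w : ℂ}
    (hf : HasFDerivAt (𝕜 := ℝ) f
      (((1 : ℂ →L[ℂ] ℂ).smulRight d).restrictScalars ℝ) w) :
    HasDerivAt f d w := by
  rw [hasDerivAt_iff_hasFDerivAt]
  rw [hasFDerivAt_iff_isLittleO_nhds_zero] at hf ⊢
  exact hf

end BranchAux

namespace BranchAux
open Complex

lemma g_hasDerivAt
    {u : ℝ × ℝ → ℝ} {D : Set (ℝ × ℝ)} (hDo : IsOpen D) (hC2 : ContDiffOn ℝ 2 u D)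
    (hharm : ∀ z ∈ D, pd1 (pd1 u) z + pd2 (pd2 u) z = 0)
    {w : ℂ} (hw : ((w.re, w.im) : ℝ × ℝ) ∈ D) :
    HasDerivAt (fun w : ℂ => pd1 u (w.re, w.im) • (1:ℂ) + pd2 u (w.re, w.im) • (-I))
      ((pd1 (pd1 u) (w.re, w.im)) • (1:ℂ) + (pd1 (pd2 u) (w.re, w.im)) • (-I)) w := by
  set z : ℝ × ℝ := (w.re, w.im) with hzdef
  obtain ⟨hp1, hp2, hsym⟩ := pd_pack hDo hC2 hw
  set A := fderiv ℝ (fderiv ℝ u) z with hA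
  set EL : ℂ →L[ℝ] ℝ × ℝ := Complex.reCLM.prod Complex.imCLM with hEL
  have hE : HasFDerivAt (fun w : ℂ => ((w.re, w.im) : ℝ × ℝ)) EL w := EL.hasFDerivAt
  have hP : HasFDerivAt (fun w : ℂ => pd1 u (w.re, w.im))
      (((ContinuousLinearMap.apply ℝ ℝ ((1:ℝ),(0:ℝ))).comp A).comp EL) w := HasFDerivAt.comp (g := pd1 u) w hp1 hE
  have hQ : HasFDerivAt (fun w : ℂ => pd2 u (w.re, w.im))
      (((ContinuousLinearMap.apply ℝ ℝ ((0:ℝ),(1:ℝ))).comp A).comp EL) w := HasFDerivAt.comp (g := pd2 u) w hp2 hE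
  have hg := (hP.smul_const (1:ℂ)).add (hQ.smul_const (-I))
  -- identify the basic second partials
  have ha11 : pd1 (pd1 u) z = A ((1:ℝ),(0:ℝ)) ((1:ℝ),(0:ℝ)) := by
    rw [pd1_eq hp1.differentiableAt, hp1.fderiv]; rfl
  have ha12 : pd1 (pd2 u) z = A ((1:ℝ),(0:ℝ)) ((0:ℝ),(1:ℝ)) := by
    rw [pd1_eq hp2.differentiableAt, hp2.fderiv]; rfl
  have ha21 : pd2 (pd1 u) z = A ((0:ℝ),(1:ℝ)) ((1:ℝ),(0:ℝ)) := by
    rw [pd2_eq hp1.differentiableAt, hp1.fderiv]; rfl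
  have ha22 : pd2 (pd2 u) z = A ((0:ℝ),(1:ℝ)) ((0:ℝ),(1:ℝ)) := by
    rw [pd2_eq hp2.differentiableAt, hp2.fderiv]; rfl
  set a : ℝ := pd1 (pd1 u) z with haa
  set b : ℝ := pd1 (pd2 u) z with hbb
  have hsym' : A ((0:ℝ),(1:ℝ)) ((1:ℝ),(0:ℝ)) = b := by
    rw [hsym ((0:ℝ),(1:ℝ)) ((1:ℝ),(0:ℝ)), ← ha12]
  have hharm' : A ((0:ℝ),(1:ℝ)) ((0:ℝ),(1:ℝ)) = -a := by
    have := hharm z hw; rw [← ha22]; linarith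
  apply hasDerivAt_of_real
  have hmapeq :
      ((((ContinuousLinearMap.apply ℝ ℝ ((1:ℝ),(0:ℝ))).comp A).comp EL).smulRight (1:ℂ) +
        (((ContinuousLinearMap.apply ℝ ℝ ((0:ℝ),(1:ℝ))).comp A).comp EL).smulRight (-I))
      = ((1 : ℂ →L[ℂ] ℂ).smulRight (a • (1:ℂ) + b • (-I))).restrictScalars ℝ := by
    apply clm_ext_complex
    · have hEL1 : EL (1:ℂ) = ((1:ℝ),(0:ℝ)) := by simp [hEL]
      simp only [ContinuousLinearMap.add_apply, ContinuousLinearMap.smulRight_apply,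
        ContinuousLinearMap.comp_apply, ContinuousLinearMap.apply_apply, hEL1,
        ContinuousLinearMap.coe_restrictScalars', ContinuousLinearMap.one_apply]
      rw [← ha11, ← ha12]
      simp [Complex.real_smul]
    · have hELI : EL I = ((0:ℝ),(1:ℝ)) := by simp [hEL]
      simp only [ContinuousLinearMap.add_apply, ContinuousLinearMap.smulRight_apply,
        ContinuousLinearMap.comp_apply, ContinuousLinearMap.apply_apply, hELI,
        ContinuousLinearMap.coe_restrictScalars', ContinuousLinearMap.one_apply]
      rw [hsym', hharm']
      simp [Complex.real_smul]
      ring_nf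
      rw [Complex.I_sq]; ring
  rw [hmapeq] at hg
  exact hg

end BranchAux

namespace BranchAux

lemma exp_mul_I_re (t : ℝ) (a : ℂ) :
    (Complex.exp (t * Complex.I) * a).re = Real.cos t * a.re - Real.sin t * a.im := by
  simp [Complex.mul_re, Complex.exp_re, Complex.exp_im]

lemma exists_dir (a : ℂ) (ha : a ≠ 0) :
    ∃ t : ℝ, -(2*π) < t ∧ t < 0 ∧ (Complex.exp (t * Complex.I) * a).re < 0 := by
  have hπ := Real.pi_pos
  by_cases him : a.im = 0
  · have hre0 : a.re ≠ 0 := by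
      intro h; exact ha (Complex.ext h him)
    rcases lt_or_gt_of_ne hre0 with hneg | hpos
    · refine ⟨-(π/4), by linarith, by linarith, ?_⟩
      rw [exp_mul_I_re, him]
      have : Real.cos (-(π/4)) = Real.sqrt 2 / 2 := by
        rw [Real.cos_neg, Real.cos_pi_div_four]
      rw [this]
      have h2 : (0:ℝ) < Real.sqrt 2 / 2 := by positivity
      nlinarith
    · refine ⟨-π, by linarith, by linarith, ?_⟩
      rw [exp_mul_I_re, him]
      rw [Real.cos_neg, Real.cos_pi]
      nlinarith
  · rcases lt_or_gt_of_ne him with hneg | hpos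
    · refine ⟨-(π/2), by linarith, by linarith, ?_⟩
      rw [exp_mul_I_re, Real.cos_neg, Real.sin_neg, Real.cos_pi_div_two, Real.sin_pi_div_two]
      nlinarith
    · refine ⟨-(3*π/2), by linarith, by linarith, ?_⟩
      have hc : Real.cos (-(3*π/2)) = 0 := by
        rw [Real.cos_neg, show (3*π/2 : ℝ) = π + π/2 by ring, Real.cos_add, Real.cos_pi,
          Real.sin_pi, Real.cos_pi_div_two]
        ring
      have hs : Real.sin (-(3*π/2)) = 1 := by
        rw [Real.sin_neg, show (3*π/2 : ℝ) = π + π/2 by ring, Real.sin_add, Real.cos_pi,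
          Real.sin_pi, Real.sin_pi_div_two]
        ring
      rw [exp_mul_I_re, hc, hs]
      nlinarith

lemma mem_disk_iff (w : ℂ) : (w.re^2 + w.im^2 < 1) ↔ w ∈ Metric.ball (0:ℂ) 1 := by
  rw [Metric.mem_ball, dist_zero_right]
  have h2 : ‖w‖^2 = w.re^2 + w.im^2 := by
    rw [Complex.sq_norm, Complex.normSq_apply]; ring
  constructor <;> intro H <;> nlinarith [norm_nonneg w]

end BranchAux

namespace BranchAux

lemma integral_rep {u : ℝ × ℝ → ℝ} {D : Set (ℝ × ℝ)} (hDo : IsOpen D)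
    (hC2 : ContDiffOn ℝ 2 u D) (z₀c w : ℂ)
    (hseg : ∀ t : ℝ, t ∈ Set.Icc (0:ℝ) 1 →
      (((z₀c + t • w).re, (z₀c + t • w).im) : ℝ × ℝ) ∈ D) :
    u ((z₀c + w).re, (z₀c + w).im) - u (z₀c.re, z₀c.im)
      = ∫ t in (0:ℝ)..1,
          ((pd1 u ((z₀c + t • w).re, (z₀c + t • w).im) • (1:ℂ)
            + pd2 u ((z₀c + t • w).re, (z₀c + t • w).im) • (-Complex.I)) * w).re := by
  have hdA : ∀ p ∈ D, DifferentiableAt ℝ u p := fun p hp =>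
    (hC2.contDiffAt (hDo.mem_nhds hp)).differentiableAt two_ne_zero
  set EL : ℂ →L[ℝ] ℝ × ℝ := Complex.reCLM.prod Complex.imCLM with hEL
  set ψ : ℝ → ℂ := fun t => z₀c + t • w with hψdef
  have hψ : ∀ t : ℝ, HasDerivAt ψ w t := by
    intro t
    simpa [hψdef] using ((hasDerivAt_id t).smul_const w).const_add z₀c
  set F : ℝ → ℝ × ℝ := fun t => (((ψ t).re, (ψ t).im) : ℝ × ℝ) with hFdef
  have hseg' : ∀ t ∈ Set.uIcc (0:ℝ) 1, F t ∈ D := by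
    intro t ht
    rw [Set.uIcc_of_le zero_le_one] at ht
    exact hseg t ht
  have hderiv : ∀ t ∈ Set.uIcc (0:ℝ) 1,
      HasDerivAt (fun t => u (F t))
        ((pd1 u (F t) • (1:ℂ) + pd2 u (F t) • (-Complex.I)) * w).re t := by
    intro t ht
    have hmem := hseg' t ht
    have h1 : HasDerivAt F (EL w) t := EL.hasFDerivAt.comp_hasDerivAt t (hψ t)
    have h2 : HasDerivAt (fun t => u (F t)) (fderiv ℝ u (F t) (EL w)) t :=
      (hdA _ hmem).hasFDerivAt.comp_hasDerivAt t h1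
    convert h2 using 1
    rw [fderiv_apply_pd (hdA _ hmem) (EL w)]
    simp [Complex.mul_re, Complex.real_smul, hEL]
    ring
  have hcont : ContinuousOn
      (fun t => ((pd1 u (F t) • (1:ℂ) + pd2 u (F t) • (-Complex.I)) * w).re)
      (Set.uIcc (0:ℝ) 1) := by
    intro t ht
    have hmem := hseg' t ht
    have hψc : ContinuousAt F t := by fun_prop
    have hP : ContinuousAt (fun t => pd1 u (F t)) t :=
      ContinuousAt.comp ((pd_pack hDo hC2 hmem).1.differentiableAt.continuousAt) hψc
    have hQ : ContinuousAt (fun t => pd2 u (F t)) t :=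
      ContinuousAt.comp ((pd_pack hDo hC2 hmem).2.1.differentiableAt.continuousAt) hψc
    exact ContinuousAt.continuousWithinAt
      (Complex.continuous_re.continuousAt.comp
        (((hP.smul continuousAt_const).add (hQ.smul continuousAt_const)).mul
          continuousAt_const))
  rw [intervalIntegral.integral_eq_sub_of_hasDerivAt hderiv
    (hcont.intervalIntegrable)]
  have h1 : ψ 1 = z₀c + w := by simp [hψdef]
  have h0 : ψ 0 = z₀c := by simp [hψdef]
  simp only [hFdef, h1, h0]

end BranchAux

/- Branch-point exclusion: let `h` be harmonic on the open unit disk `D`, odd under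
the reflection `(x,y) ↦ (x,−y)` (so `h = 0` on the real diameter) and nonnegative on
the lower half-disk. If the gradient of `h` vanishes at some point of the real
diameter, then `h` is identically zero on `D`. -/
set_option maxHeartbeats 1000000 in
/-- Branch-point exclusion: let `h` be harmonic on the open unit disk `D`, odd under
the reflection `(x,y) ↦ (x,−y)` (so `h = 0` on the real diameter) and nonnegative on
the lower half-disk. If the gradient of `h` vanishes at some point of the real
diameter, then `h` is identically zero on `D`. -/
theorem harmonic_odd_nonneg_gradient_vanishes
    (h : ℝ × ℝ → ℝ)
    (D : Set (ℝ × ℝ)) (hD : D = {z : ℝ × ℝ | z.1 ^ 2 + z.2 ^ 2 < 1})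
    (hC2 : ContDiffOn ℝ 2 h D)
    (hharm : ∀ z ∈ D, pd1 (pd1 h) z + pd2 (pd2 h) z = 0)
    (hodd : ∀ z ∈ D, h (z.1, -z.2) = -h z)
    (hnonneg : ∀ z ∈ D, z.2 < 0 → 0 ≤ h z)
    (z₀ : ℝ × ℝ) (hz₀ : z₀ ∈ D) (hz₀real : z₀.2 = 0)
    (hgrad : pd1 h z₀ = 0 ∧ pd2 h z₀ = 0) :
    ∀ z ∈ D, h z = 0 := by
  have hDo : IsOpen D := by
    rw [hD]
    exact isOpen_lt (by fun_prop) continuous_const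
  have hDconv : Convex ℝ D := by
    rw [hD]
    intro x hx y hy a b ha hb hab
    simp only [Set.mem_setOf_eq, Prod.fst_add, Prod.snd_add, Prod.smul_fst, Prod.smul_snd,
      smul_eq_mul] at *
    have key : (a*x.1+b*y.1)^2 + (a*x.2+b*y.2)^2
        ≤ a*(x.1^2+x.2^2) + b*(y.1^2+y.2^2) := by
      nlinarith [mul_nonneg (mul_nonneg ha hb) (sq_nonneg (x.1 - y.1)),
        mul_nonneg (mul_nonneg ha hb) (sq_nonneg (x.2 - y.2))]
    rcases eq_or_lt_of_le ha with ha0 | ha0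
    · have hb1 : b = 1 := by linarith
      rw [← ha0] at key ⊢
      rw [hb1] at key ⊢
      nlinarith [hy]
    · have h1 : a*(x.1^2+x.2^2) < a*1 := mul_lt_mul_of_pos_left hx ha0
      have h2 : b*(y.1^2+y.2^2) ≤ b*1 := mul_le_mul_of_nonneg_left (le_of_lt hy) hb
      nlinarith [key]
  have hdA : ∀ p ∈ D, DifferentiableAt ℝ h p := fun p hp =>
    (hC2.contDiffAt (hDo.mem_nhds hp)).differentiableAt two_ne_zero
  set B : Set ℂ := Metric.ball (0:ℂ) 1 with hBdef
  have hmemD : ∀ v : ℂ, (((v.re, v.im) : ℝ × ℝ) ∈ D ↔ v ∈ B) := by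
    intro v
    rw [hD, ← BranchAux.mem_disk_iff]
    exact Iff.rfl
  set g : ℂ → ℂ :=
    fun v => pd1 h (v.re, v.im) • (1:ℂ) + pd2 h (v.re, v.im) • (-Complex.I) with hgdef
  have hgd : ∀ v ∈ B, HasDerivAt g
      ((pd1 (pd1 h) (v.re, v.im)) • (1:ℂ) + (pd1 (pd2 h) (v.re, v.im)) • (-Complex.I)) v :=
    fun v hv => BranchAux.g_hasDerivAt hDo hC2 hharm ((hmemD v).2 hv)
  have hgan : AnalyticOnNhd ℂ g B := by
    have : DifferentiableOn ℂ g B :=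
      fun v hv => ((hgd v hv).differentiableAt).differentiableWithinAt
    exact this.analyticOnNhd Metric.isOpen_ball
  set z₀c : ℂ := ((z₀.1 : ℝ) : ℂ) with hz₀cdef
  have hz₀c : ((z₀c.re, z₀c.im) : ℝ × ℝ) = z₀ := by
    simp only [hz₀cdef, Complex.ofReal_re, Complex.ofReal_im]
    exact Prod.ext rfl hz₀real.symm
  have hz₀B : z₀c ∈ B := (hmemD z₀c).1 (by rw [hz₀c]; exact hz₀)
  have hh0 : h z₀ = 0 := by
    have hο := hodd z₀ hz₀
    have hzeq : ((z₀.1, -z₀.2) : ℝ × ℝ) = z₀ := by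
      rw [hz₀real, neg_zero]
      exact Prod.ext rfl hz₀real.symm
    rw [hzeq] at hο
    linarith
  have hgz₀ : g z₀c = 0 := by
    rw [hgdef]
    simp only [hz₀c, hgrad.1, hgrad.2, zero_smul, add_zero]
  have hg0 : ∀ᶠ v in 𝓝 z₀c, g v = 0 := by
    by_contra hne
    have hA : AnalyticAt ℂ g z₀c := hgan z₀c hz₀B
    have hord : analyticOrderAt g z₀c ≠ ⊤ := fun H => hne (analyticOrderAt_eq_top.mp H)
    obtain ⟨p, hp⟩ := WithTop.ne_top_iff_exists.mp hord
    obtain ⟨G, hGan, hGa, hev⟩ := (hA.analyticOrderAt_eq_natCast (n := p)).mp hp.symm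
    have hp1 : 1 ≤ p := by
      by_contra hcon
      have hp0 : p = 0 := by omega
      have hself := hev.self_of_nhds
      rw [hp0] at hself
      simp only [pow_zero, one_smul] at hself
      exact hGa (hself ▸ hgz₀)
    set m : ℕ := p + 1 with hmdef
    set a : ℂ := G z₀c with hadef
    obtain ⟨t, ht1, ht2, ht3⟩ := BranchAux.exists_dir a hGa
    have hπ := Real.pi_pos
    have hm2 : (2:ℝ) ≤ (m:ℝ) := by
      have : 2 ≤ m := by omega
      exact_mod_cast this
    have hmpos : (0:ℝ) < (m:ℝ) := by linarith
    set θ : ℝ := t / m with hθdef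
    have hθneg : θ < 0 := div_neg_of_neg_of_pos ht2 hmpos
    have hθgt : -π < θ := by
      rw [hθdef, lt_div_iff₀ hmpos]
      nlinarith
    have hsinθ : Real.sin θ < 0 := Real.sin_neg_of_neg_of_neg_pi_lt hθneg hθgt
    have hmθ : (m:ℝ) * θ = t := by
      rw [hθdef]
      field_simp [hmpos.ne']
    set negre : ℝ := (Complex.exp (t*Complex.I) * a).re with hnegredef
    set ε : ℝ := -negre / (2*(m:ℝ)) with hεdef
    have hε : 0 < ε := div_pos (by linarith) (by linarith)
    have hGc : ∀ᶠ v in 𝓝 z₀c, ‖G v - a‖ < ε := by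
      have hcontG : ContinuousAt G z₀c := hGan.continuousAt
      filter_upwards [hcontG (Metric.ball_mem_nhds a hε)] with v hv
      rw [← dist_eq_norm]
      exact Metric.mem_ball.mp hv
    have hevB : ∀ᶠ v in 𝓝 z₀c, v ∈ B := Metric.isOpen_ball.mem_nhds hz₀B
    obtain ⟨ρ, hρpos, hρ⟩ := Metric.eventually_nhds_iff.mp ((hev.and hGc).and hevB)
    set r : ℝ := ρ/2 with hrdef
    have hrpos : 0 < r := by rw [hrdef]; linarith
    have hrρ : r < ρ := by rw [hrdef]; linarith
    set w : ℂ := (r:ℂ) * Complex.exp ((θ:ℝ) * Complex.I) with hwdef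
    have hwnorm : ‖w‖ = r := by
      rw [hwdef, norm_mul, Complex.norm_real, Real.norm_eq_abs,
        Complex.norm_exp_ofReal_mul_I, abs_of_pos hrpos, mul_one]
    have hsegdist : ∀ s : ℝ, s ∈ Set.Icc (0:ℝ) 1 → dist (z₀c + s • w) z₀c < ρ := by
      intro s hs
      rw [dist_eq_norm, add_sub_cancel_left, norm_smul, Real.norm_eq_abs, hwnorm,
        abs_of_nonneg hs.1]
      nlinarith [hs.2]
    have hseg : ∀ s : ℝ, s ∈ Set.Icc (0:ℝ) 1 →
        (((z₀c + s • w).re, (z₀c + s • w).im) : ℝ × ℝ) ∈ D := by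
      intro s hs
      exact (hmemD _).2 ((hρ (hsegdist s hs)).2)
    have hrep := BranchAux.integral_rep hDo hC2 z₀c w hseg
    rw [hz₀c, hh0, sub_zero] at hrep
    set Y : ℝ → ℂ := fun s => (s^p : ℝ) • G (z₀c + s • w) with hYdef
    have hwne : w ≠ 0 := by
      rw [hwdef]
      exact mul_ne_zero (by exact_mod_cast hrpos.ne') (Complex.exp_ne_zero _)
    have hint_eq : Set.EqOn (fun s => ((pd1 h ((z₀c + s • w).re, (z₀c + s • w).im) • (1:ℂ)
            + pd2 h ((z₀c + s • w).re, (z₀c + s • w).im) • (-Complex.I)) * w).re)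
        (fun s => (w^m * Y s).re) (Set.uIcc (0:ℝ) 1) := by
      intro s hs
      rw [Set.uIcc_of_le zero_le_one] at hs
      have hfact := (hρ (hsegdist s hs)).1.1
      show ((g (z₀c + s • w)) * w).re = _
      rw [hfact]
      congr 1
      rw [hYdef]
      simp only [add_sub_cancel_left, Complex.real_smul, smul_eq_mul, hmdef]
      push_cast
      ring
    rw [intervalIntegral.integral_congr hint_eq] at hrep
    have hYcont : ContinuousOn Y (Set.uIcc (0:ℝ) 1) := by
      have hgψ : ContinuousOn (fun s : ℝ => g (z₀c + s • w)) (Set.uIcc (0:ℝ) 1) := by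
        intro s hs
        rw [Set.uIcc_of_le zero_le_one] at hs
        have hvB : (z₀c + s • w) ∈ B := (hρ (hsegdist s hs)).2
        have hca : ContinuousAt g (z₀c + s • w) := (hgd _ hvB).differentiableAt.continuousAt
        have hψc : ContinuousAt (fun s : ℝ => z₀c + s • w) s := by fun_prop
        have hcc : ContinuousAt (fun s : ℝ => g (z₀c + s • w)) s :=
          Filter.Tendsto.comp hca hψc
        exact hcc.continuousWithinAt
      apply ContinuousOn.congr (hgψ.div_const (w^p))
      intro s hs
      rw [Set.uIcc_of_le zero_le_one] at hs
      have hfact := (hρ (hsegdist s hs)).1.1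
      show Y s = g (z₀c + s • w) / w^p
      rw [hYdef]
      simp only []
      rw [hfact, add_sub_cancel_left, eq_div_iff (pow_ne_zero p hwne)]
      simp only [Complex.real_smul, smul_eq_mul]
      push_cast
      ring
    have hYint : IntervalIntegrable Y MeasureTheory.volume 0 1 := hYcont.intervalIntegrable
    set Φ : ℂ := ∫ s in (0:ℝ)..1, Y s with hΦdef
    have hpull : (∫ s in (0:ℝ)..1, (w^m * Y s).re) = (w^m * Φ).re := by
      have h1 : IntervalIntegrable (fun s => w^m * Y s) MeasureTheory.volume 0 1 :=
        hYint.const_mul _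
      have h2 := Complex.reCLM.intervalIntegral_comp_comm h1
      rw [intervalIntegral.integral_const_mul] at h2
      simpa using h2
    rw [hpull] at hrep
    have hconti : Continuous (fun s : ℝ => (s^p : ℝ) • a) :=
      (continuous_pow p).smul continuous_const
    have hconst_int : IntervalIntegrable (fun s : ℝ => (s^p : ℝ) • a) MeasureTheory.volume 0 1 :=
      hconti.intervalIntegrable 0 1
    have hconst : (∫ s in (0:ℝ)..1, (s^p : ℝ) • a) = ((1:ℝ)/(m:ℝ)) • a := by
      rw [intervalIntegral.integral_smul_const]
      congr 1
      rw [integral_pow]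
      simp [hmdef]
    have hΦa : ‖Φ - ((1:ℝ)/(m:ℝ)) • a‖ ≤ ε := by
      rw [hΦdef, ← hconst, ← intervalIntegral.integral_sub hYint hconst_int]
      have hb := intervalIntegral.norm_integral_le_of_norm_le_const (C := ε)
        (f := fun s => Y s - (s^p : ℝ) • a) (a := (0:ℝ)) (b := 1) ?_
      · simpa using hb
      · intro s hs
        rw [Set.uIoc_of_le zero_le_one] at hs
        have hsIcc : s ∈ Set.Icc (0:ℝ) 1 := ⟨le_of_lt hs.1, hs.2⟩
        have hGclose := (hρ (hsegdist s hsIcc)).1.2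
        rw [hYdef]
        simp only []
        rw [← smul_sub, norm_smul, Real.norm_eq_abs, abs_of_nonneg (pow_nonneg (le_of_lt hs.1) p)]
        have hsp : s^p ≤ 1 := pow_le_one₀ (le_of_lt hs.1) hs.2
        nlinarith [norm_nonneg (G (z₀c + s • w) - a), hGclose]
    have hwm : w^m = ((r^m : ℝ) : ℂ) * Complex.exp ((t:ℝ) * Complex.I) := by
      have h1 : Complex.exp ((θ:ℝ) * Complex.I)^m = Complex.exp ((t:ℝ) * Complex.I) := by
        rw [← Complex.exp_nat_mul]
        congr 1
        rw [← hmθ]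
        push_cast
        ring
      rw [hwdef, mul_pow, h1]
      norm_cast
    have hrm : (0:ℝ) < r^m := pow_pos hrpos m
    have hre1 : ((w^m) * (Φ - ((1:ℝ)/(m:ℝ)) • a)).re ≤ r^m * ε := by
      have h1 : ((w^m) * (Φ - ((1:ℝ)/(m:ℝ)) • a)).re ≤ ‖(w^m) * (Φ - ((1:ℝ)/(m:ℝ)) • a)‖ := by
        exact Complex.re_le_norm _
      have h2 : ‖(w^m) * (Φ - ((1:ℝ)/(m:ℝ)) • a)‖ = r^m * ‖Φ - ((1:ℝ)/(m:ℝ)) • a‖ := by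
        rw [norm_mul, norm_pow, hwnorm]
      calc ((w^m) * (Φ - ((1:ℝ)/(m:ℝ)) • a)).re ≤ r^m * ‖Φ - ((1:ℝ)/(m:ℝ)) • a‖ := by
            rw [← h2]; exact h1
      _ ≤ r^m * ε := by nlinarith [hΦa]
    have hre2 : ((w^m) * (((1:ℝ)/(m:ℝ)) • a)).re = r^m * (((1:ℝ)/(m:ℝ)) * negre) := by
      rw [hwm, Complex.real_smul]
      have hrearr : ((r^m : ℝ) : ℂ) * Complex.exp ((t:ℝ) * Complex.I)
            * ((((1:ℝ)/(m:ℝ) : ℝ) : ℂ) * a)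
          = ((r^m : ℝ) : ℂ) * ((((1:ℝ)/(m:ℝ) : ℝ) : ℂ)
            * (Complex.exp ((t:ℝ) * Complex.I) * a)) := by ring
      rw [hrearr, Complex.re_ofReal_mul, Complex.re_ofReal_mul, hnegredef]
    have hval : h ((z₀c + w).re, (z₀c + w).im) < 0 := by
      have hsplit : (w^m * Φ).re = ((w^m) * (Φ - ((1:ℝ)/(m:ℝ)) • a)).re
          + ((w^m) * (((1:ℝ)/(m:ℝ)) • a)).re := by
        rw [← Complex.add_re, ← mul_add, sub_add_cancel]
      rw [hrep, hsplit, hre2]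
      have hkey : r^m * ε + r^m * (((1:ℝ)/(m:ℝ)) * negre) < 0 := by
        rw [hεdef]
        have heq : -negre/(2*(m:ℝ)) + (1/(m:ℝ)) * negre = negre/(2*(m:ℝ)) := by
          field_simp
          ring
        have : r^m * (-negre/(2*(m:ℝ))) + r^m * ((1/(m:ℝ)) * negre)
            = r^m * (negre/(2*(m:ℝ))) := by
          rw [← mul_add, heq]
        rw [this]
        apply mul_neg_of_pos_of_neg hrm
        exact div_neg_of_neg_of_pos ht3 (by linarith)
      linarith [hre1]
    have hptD : ((z₀c + w).re, (z₀c + w).im) ∈ D := by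
      have h1 : dist (z₀c + w) z₀c < ρ := by
        have := hsegdist 1 ⟨zero_le_one, le_refl 1⟩
        rwa [one_smul] at this
      exact (hmemD _).2 ((hρ h1).2)
    have hptneg : (((z₀c + w).re, (z₀c + w).im) : ℝ × ℝ).2 < 0 := by
      show (z₀c + w).im < 0
      rw [Complex.add_im]
      have hz0im : z₀c.im = 0 := by simp [hz₀cdef]
      have hwim : w.im = r * Real.sin θ := by
        rw [hwdef]
        simp [Complex.mul_im, Complex.exp_im, Complex.exp_re]
      rw [hz0im, zero_add, hwim]
      exact mul_neg_of_pos_of_neg hrpos hsinθ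
    exact absurd (hnonneg _ hptD hptneg) (not_le.mpr hval)
  have geq : Set.EqOn g 0 B :=
    hgan.eqOn_zero_of_preconnected_of_eventuallyEq_zero
      ((convex_ball (0:ℂ) 1).isPreconnected) hz₀B hg0
  have hpd0 : ∀ p ∈ D, pd1 h p = 0 ∧ pd2 h p = 0 := by
    intro p hp
    set v : ℂ := (⟨p.1, p.2⟩ : ℂ) with hvdef
    have hvre : ((v.re, v.im) : ℝ × ℝ) = p := rfl
    have hvB : v ∈ B := (hmemD v).1 (by rw [hvre]; exact hp)
    have hgv : g v = 0 := geq hvB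
    rw [hgdef] at hgv
    simp only [hvre] at hgv
    have hre := congrArg Complex.re hgv
    have him := congrArg Complex.im hgv
    simp [Complex.real_smul, Complex.add_re, Complex.add_im, Complex.mul_re, Complex.mul_im]
      at hre him
    constructor
    · simpa using hre
    · simpa using him
  intro z hzD
  have hfd0 : ∀ p ∈ D, ‖fderiv ℝ h p‖ ≤ 0 := by
    intro p hp
    have : fderiv ℝ h p = 0 := by
      apply ContinuousLinearMap.ext
      intro v
      rw [BranchAux.fderiv_apply_pd (hdA p hp) v, (hpd0 p hp).1, (hpd0 p hp).2]
      simp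
    rw [this]
    simp
  have hbound := hDconv.norm_image_sub_le_of_norm_fderiv_le hdA hfd0 hz₀ hzD
  rw [hh0, sub_zero, zero_mul] at hbound
  have := norm_nonneg (h z)
  have : ‖h z‖ = 0 := le_antisymm hbound this
  simpa using this
end
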